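/- Let μ₀ ∈ C(ℝ^d) ∩ L^1_+(ℝ^d). Suppose for every unit vector e ∈ ℝ^d there exists a hyperplane H with normal vector e such that μ₀ is symmetric decreasing about H. Then μ₀ is radially decreasing up to a translation: there exists a ∈ ℝ^d such that μ₀(· - a) is radially symmetric and non-increasing in |x|. -/

import Mathlib

open MeasureTheory
open scoped RealInnerProductSpace ENNReal

variable {d : ℕ}

def RDValid (μ : EuclideanSpace ℝ (Fin d) → ℝ) (e : EuclideanSpace ℝ (Fin d)) (c : ℝ) : Prop :=
  ∀ x, ⟪x, e⟫ = c →
    (∀ t : ℝ, μ (x + t • e) = μ (x - t • e)) ∧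
    (∀ s t : ℝ, 0 ≤ s → s ≤ t → μ (x + t • e) ≤ μ (x + s • e))

lemma inner_self_one {e : EuclideanSpace ℝ (Fin d)} (he : ‖e‖ = 1) : ⟪e, e⟫ = 1 := by
  rw [real_inner_self_eq_norm_sq, he]; norm_num

lemma RDValid.reflect {μ : EuclideanSpace ℝ (Fin d) → ℝ} {e : EuclideanSpace ℝ (Fin d)} {c : ℝ}
    (he : ‖e‖ = 1) (h : RDValid μ e c) (y : EuclideanSpace ℝ (Fin d)) :
    μ (y + (2 * (c - ⟪y, e⟫)) • e) = μ y := by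
  have hee := inner_self_one he
  set p := ⟪y, e⟫ with hp
  set x := y + (c - p) • e with hx
  have hxc : ⟪x, e⟫ = c := by
    rw [hx, inner_add_left, real_inner_smul_left, hee]; ring
  have hs := (h x hxc).1 (p - c)
  have h1 : x + (p - c) • e = y := by rw [hx]; module
  have h2 : x - (p - c) • e = y + (2 * (c - p)) • e := by rw [hx]; module
  rw [h1, h2] at hs
  exact hs.symm

lemma RDValid.period {μ : EuclideanSpace ℝ (Fin d) → ℝ} {e : EuclideanSpace ℝ (Fin d)} {c c' : ℝ}
    (he : ‖e‖ = 1) (h : RDValid μ e c) (h' : RDValid μ e c') (y : EuclideanSpace ℝ (Fin d)) :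
    μ (y + (2 * (c' - c)) • e) = μ y := by
  have hee := inner_self_one he
  set p := ⟪y, e⟫ with hp
  set z := y + (2 * (c - p)) • e with hz
  have h1 : μ z = μ y := h.reflect he y
  have hzc : ⟪z, e⟫ = 2 * c - p := by
    rw [hz, inner_add_left, real_inner_smul_left, hee]; ring
  have h2 := h'.reflect he z
  rw [hzc] at h2
  have h3 : z + (2 * (c' - (2 * c - p))) • e = y + (2 * (c' - c)) • e := by rw [hz]; module
  rw [h3] at h2
  rw [h2, h1]

/-- If there are two distinct valid centers in a direction, μ vanishes. -/
lemma RDValid.eq_zero {μ : EuclideanSpace ℝ (Fin d) → ℝ} {e : EuclideanSpace ℝ (Fin d)} {c c' : ℝ}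
    (he : ‖e‖ = 1) (hcont : Continuous μ) (hpos : ∀ x, 0 ≤ μ x) (hint : Integrable μ)
    (h : RDValid μ e c) (h' : RDValid μ e c') (hne : c ≠ c') : ∀ x, μ x = 0 := by
  have hd : 0 < d := by
    rcases Nat.eq_zero_or_pos d with h0 | h0
    · exfalso
      subst h0
      have : e = 0 := PiLp.ext fun i => Fin.elim0 i
      rw [this, norm_zero] at he; norm_num at he
    · exact h0
  -- a positive period
  obtain ⟨T, hT0, hT⟩ : ∃ T : ℝ, 0 < T ∧ ∀ y, μ (y + T • e) = μ y := by
    rcases lt_or_gt_of_ne hne with hlt | hlt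
    · exact ⟨2 * (c' - c), by linarith, fun y => h.period he h' y⟩
    · exact ⟨2 * (c - c'), by linarith, fun y => h'.period he h y⟩
  have hTn : ∀ (n : ℕ) (y), μ (y + ((n : ℝ) * T) • e) = μ y := by
    intro n
    induction n with
    | zero => intro y; simp
    | succ n ih =>
      intro y
      have : y + (((n : ℝ) + 1) * T) • e = (y + T • e) + ((n : ℝ) * T) • e := by module
      rw [Nat.cast_succ, this, ih, hT]
  -- constancy along lines in direction e
  have hline : ∀ (y : EuclideanSpace ℝ (Fin d)) (t : ℝ), μ (y + t • e) = μ y := by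
    have hee := inner_self_one he
    intro y t
    set p := ⟪y, e⟫ with hp
    set x := y + (c - p) • e with hx
    have hxc : ⟪x, e⟫ = c := by
      rw [hx, inner_add_left, real_inner_smul_left, hee]; ring
    obtain ⟨hsymm, hmono⟩ := h x hxc
    have key : ∀ s : ℝ, μ (x + s • e) = μ x := by
      have key0 : ∀ s : ℝ, 0 ≤ s → μ (x + s • e) = μ x := by
        intro s hs
        obtain ⟨n, hn⟩ := exists_nat_ge (s / T)
        have hsn : s ≤ (n : ℝ) * T := by
          rwa [div_le_iff₀ hT0] at hn
        have h1 : μ (x + s • e) ≤ μ x := by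
          have := hmono 0 s le_rfl hs
          simpa using this
        have h2 : μ x ≤ μ (x + s • e) := by
          have := hmono s ((n : ℝ) * T) hs hsn
          rwa [show x + ((n : ℝ) * T) • e = x + ((n : ℝ) * T) • e from rfl, hTn n x] at this
        linarith
      intro s
      rcases le_or_gt 0 s with hs | hs
      · exact key0 s hs
      · have := hsymm (-s)
        have h2 : x - (-s) • e = x + s • e := by module
        rw [h2] at this
        rw [← this]
        exact key0 (-s) (by linarith)
    have e1 : y + t • e = x + (p - c + t) • e := by rw [hx]; module
    have e2 : y = x + (p - c) • e := by rw [hx]; module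
    rw [e1, key, e2, key]
  -- contradiction with integrability if μ is somewhere nonzero
  by_contra hcon
  push_neg at hcon
  obtain ⟨x₀, hx₀⟩ := hcon
  have hx₀pos : 0 < μ x₀ := lt_of_le_of_ne (hpos x₀) (Ne.symm hx₀)
  set ε := μ x₀ / 2 with hε
  have hεpos : 0 < ε := by positivity
  have hU : IsOpen (μ ⁻¹' Set.Ioi ε) := (isOpen_Ioi).preimage hcont
  have hx₀U : x₀ ∈ μ ⁻¹' Set.Ioi ε := by
    simp only [Set.mem_preimage, Set.mem_Ioi, hε]; linarith
  obtain ⟨r, hr, hball⟩ := Metric.isOpen_iff.mp hU x₀ hx₀U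
  set A := {z | ε ≤ μ z} with hA
  have hAfin : volume A < ⊤ := hint.measure_ge_lt_top hεpos
  set L := 2 * r + 1 with hL
  set ctr : ℕ → EuclideanSpace ℝ (Fin d) := fun k => x₀ + ((k : ℝ) * L) • e with hctr
  have hballs : ∀ k : ℕ, Metric.ball (ctr k) r ⊆ A := by
    intro k z hz
    have hz' : z - ((k : ℝ) * L) • e ∈ Metric.ball x₀ r := by
      rw [Metric.mem_ball, dist_eq_norm] at hz ⊢
      have : z - ((k : ℝ) * L) • e - x₀ = z - ctr k := by rw [hctr]; module
      rw [this]; exact hz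
    have := hball hz'
    simp only [Set.mem_preimage, Set.mem_Ioi] at this
    have heq : μ z = μ (z - ((k : ℝ) * L) • e) := by
      have := hline (z - ((k : ℝ) * L) • e) ((k : ℝ) * L)
      rw [show z - ((k : ℝ) * L) • e + ((k : ℝ) * L) • e = z by module] at this
      exact this
    rw [hA, Set.mem_setOf_eq, heq]
    linarith
  have hdisj : ∀ j k : ℕ, j ≠ k → Disjoint (Metric.ball (ctr j) r) (Metric.ball (ctr k) r) := by
    intro j k hjk
    apply Metric.ball_disjoint_ball
    rw [dist_eq_norm, hctr]
    have : x₀ + ((j : ℝ) * L) • e - (x₀ + ((k : ℝ) * L) • e) = (((j : ℝ) - k) * L) • e := by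
      module
    rw [this, norm_smul, he, mul_one, Real.norm_eq_abs, abs_mul, abs_of_pos (by rw [hL]; linarith : (0:ℝ) < L)]
    have h1 : (1 : ℝ) ≤ |(j : ℝ) - k| := by
      have : (j : ℤ) ≠ k := by exact_mod_cast hjk
      have h2 : (1 : ℤ) ≤ |(j : ℤ) - k| := Int.one_le_abs (sub_ne_zero.mpr this)
      have : (1 : ℝ) ≤ |((j : ℤ) - k : ℤ)| := by exact_mod_cast h2
      simpa using this
    nlinarith [hr.le]
  set v := volume (Metric.ball x₀ r) with hv
  have hvpos : 0 < v := Metric.measure_ball_pos _ _ hr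
  have hvne : v ≠ ⊤ := measure_ball_lt_top.ne
  have hvk : ∀ k : ℕ, volume (Metric.ball (ctr k) r) = v := by
    intro k
    rw [hv]
    exact (Measure.addHaar_ball_center volume (ctr k) r).trans
      (Measure.addHaar_ball_center volume x₀ r).symm
  have hn : ∀ n : ℕ, (n : ℝ≥0∞) * v ≤ volume A := by
    intro n
    have hmeas : ∀ k ∈ Finset.range n, MeasurableSet (Metric.ball (ctr k) r) :=
      fun k _ => measurableSet_ball
    have hpd : (↑(Finset.range n) : Set ℕ).PairwiseDisjoint fun k => Metric.ball (ctr k) r :=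
      fun j _ k _ hjk => hdisj j k hjk
    calc (n : ℝ≥0∞) * v = ∑ k ∈ Finset.range n, volume (Metric.ball (ctr k) r) := by
          simp [hvk, Finset.sum_const, mul_comm]
      _ = volume (⋃ k ∈ Finset.range n, Metric.ball (ctr k) r) :=
          (measure_biUnion_finset hpd hmeas).symm
      _ ≤ volume A := by
          apply measure_mono
          intro z hz
          simp only [Set.mem_iUnion] at hz
          obtain ⟨k, _, hk⟩ := hz
          exact hballs k hk
  have hdivne : volume A / v ≠ ⊤ := (ENNReal.div_lt_top hAfin.ne hvpos.ne').ne
  obtain ⟨n, hnn⟩ := ENNReal.exists_nat_gt hdivne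
  have : volume A < (n : ℝ≥0∞) * v := by
    rwa [ENNReal.div_lt_iff (Or.inl hvpos.ne') (Or.inl hvne)] at hnn
  exact absurd (hn n) (not_le.mpr this)

lemma RDValid.translate {μ : EuclideanSpace ℝ (Fin d) → ℝ} {e a : EuclideanSpace ℝ (Fin d)} {c : ℝ}
    (h : RDValid μ e c) : RDValid (fun x => μ (x + a)) e (c - ⟪a, e⟫) := by
  intro x hx
  have hx' : ⟪x + a, e⟫ = c := by rw [inner_add_left]; linarith
  obtain ⟨hs, hm⟩ := h (x + a) hx'
  constructor
  · intro t
    have e1 : x + t • e + a = (x + a) + t • e := by module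
    have e2 : x - t • e + a = (x + a) - t • e := by module
    simp only [e1, e2]; exact hs t
  · intro s t hs0 hst
    have e1 : x + t • e + a = (x + a) + t • e := by module
    have e2 : x + s • e + a = (x + a) + s • e := by module
    simp only [e1, e2]; exact hm s t hs0 hst

/-- Point symmetry from coordinate-hyperplane symmetries. -/
lemma even_of_basis_valid {μ : EuclideanSpace ℝ (Fin d) → ℝ}
    (hb : ∀ i : Fin d, RDValid μ (EuclideanSpace.basisFun (Fin d) ℝ i) 0) :
    ∀ x, μ (-x) = μ x := by
  set b := EuclideanSpace.basisFun (Fin d) ℝ with hbdef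
  have hbnorm : ∀ i, ‖b i‖ = 1 := b.orthonormal.1
  have key : ∀ s : Finset (Fin d), ∀ y,
      μ (y - (2 : ℝ) • ∑ i ∈ s, ⟪y, b i⟫ • b i) = μ y := by
    intro s
    induction s using Finset.induction_on with
    | empty => intro y; simp
    | insert j s' hj ih =>
      intro y
      set S := ∑ i ∈ s', ⟪y, b i⟫ • b i with hS
      set y' := y - (2 : ℝ) • S with hy'
      have hSj : ⟪S, b j⟫ = 0 := by
        rw [hS, sum_inner]
        apply Finset.sum_eq_zero
        intro i hi
        rw [real_inner_smul_left, b.orthonormal.2 (by rintro rfl; exact hj hi), mul_zero]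
      have hyj : ⟪y', b j⟫ = ⟪y, b j⟫ := by
        rw [hy', inner_sub_left, real_inner_smul_left, hSj]; ring
      have hrefl := (hb j).reflect (hbnorm j) y'
      rw [hyj] at hrefl
      have harr : y' + (2 * (0 - ⟪y, b j⟫)) • b j
          = y - (2 : ℝ) • ∑ i ∈ insert j s', ⟪y, b i⟫ • b i := by
        rw [Finset.sum_insert hj, hy', hS]
        module
      rw [harr] at hrefl
      rw [hrefl, ih]
  intro x
  have hx := key Finset.univ x
  have hsum : ∑ i : Fin d, ⟪x, b i⟫ • b i = x := by
    have h1 : ∑ i : Fin d, ⟪x, b i⟫ • b i = ∑ i : Fin d, ⟪b i, x⟫ • b i :=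
      Finset.sum_congr rfl fun i _ => by rw [real_inner_comm]
    rw [h1]
    exact b.sum_repr' x
  rw [hsum] at hx
  have : x - (2 : ℝ) • x = -x := by module
  rw [this] at hx
  exact hx

/-- Flip the center using point symmetry. -/
lemma RDValid.neg_center {μ : EuclideanSpace ℝ (Fin d) → ℝ} {e : EuclideanSpace ℝ (Fin d)} {γ : ℝ}
    (heven : ∀ x, μ (-x) = μ x) (h : RDValid μ e γ) : RDValid μ e (-γ) := by
  intro x hx
  have hx' : ⟪-x, e⟫ = γ := by rw [inner_neg_left]; linarith
  obtain ⟨hs, hm⟩ := h (-x) hx'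
  have hkey : ∀ t : ℝ, μ (x + t • e) = μ (-x + t • e) := by
    intro t
    have e1 : -(x + t • e) = -x + (-t) • e := by module
    have e2 : -x - (-t) • e = -x + t • e := by module
    calc μ (x + t • e) = μ (-(x + t • e)) := (heven _).symm
      _ = μ (-x + (-t) • e) := by rw [e1]
      _ = μ (-x - (-t) • e) := hs (-t)
      _ = μ (-x + t • e) := by rw [e2]
  constructor
  · intro t
    rw [hkey t, hs t, show -x - t • e = -x + (-t) • e by module, ← hkey (-t),
      show x + (-t) • e = x - t • e by module]
  · intro s t hs0 hst
    rw [hkey t, hkey s]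
    exact hm s t hs0 hst

lemma rotation_invariant {μ : EuclideanSpace ℝ (Fin d) → ℝ}
    (hall : ∀ e : EuclideanSpace ℝ (Fin d), ‖e‖ = 1 → RDValid μ e 0)
    {u w : EuclideanSpace ℝ (Fin d)} (hu : ‖u‖ = 1) (hw : ‖w‖ = 1) (r : ℝ) :
    μ (r • u) = μ (r • w) := by
  by_cases huw : u = w
  · rw [huw]
  · set q := u - w with hq
    have hq0 : q ≠ 0 := sub_ne_zero.mpr huw
    have hqn : 0 < ‖q‖ := norm_pos_iff.mpr hq0
    set α := ⟪u, q⟫ with hα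
    have hinner : ⟪u, u⟫ = 1 := inner_self_one hu
    have h1 : ‖q‖ ^ 2 = 2 - 2 * ⟪u, w⟫ := by
      rw [hq, norm_sub_sq_real, hu, hw]; ring
    have h2 : α = 1 - ⟪u, w⟫ := by rw [hα, hq, inner_sub_right, hinner]
    have hα2 : ‖q‖ ^ 2 = 2 * α := by rw [h1, h2]; ring
    have hαpos : 0 < α := by nlinarith
    have hq2 : ‖q‖ * ‖q‖ = 2 * α := by nlinarith
    set n := ‖q‖⁻¹ • q with hn
    have hnn : ‖n‖ = 1 := by
      rw [hn, norm_smul, norm_inv, norm_norm, inv_mul_cancel₀ hqn.ne']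
    have h3 : ‖q‖⁻¹ * ‖q‖⁻¹ = (2 * α)⁻¹ := by rw [← mul_inv, hq2]
    have hcoef : (2 * (0 - r * (‖q‖⁻¹ * α))) * ‖q‖⁻¹ = -r := by
      have e1 : (2 * (0 - r * (‖q‖⁻¹ * α))) * ‖q‖⁻¹
          = -r * (2 * α * (‖q‖⁻¹ * ‖q‖⁻¹)) := by ring
      rw [e1, h3, mul_inv_cancel₀ (by positivity : (2 * α) ≠ 0), mul_one]
    have hip : ⟪r • u, n⟫ = r * (‖q‖⁻¹ * α) := by
      rw [hn, real_inner_smul_left, real_inner_smul_right]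
    have hrefl := (hall n hnn).reflect hnn (r • u)
    rw [hip] at hrefl
    have harr : r • u + (2 * (0 - r * (‖q‖⁻¹ * α))) • n = r • w := by
      rw [hn, smul_smul, hcoef, hq]; module
    rw [harr] at hrefl
    exact hrefl.symm

open MeasureTheory

/-- If a continuous nonnegative integrable function on `ℝᵈ` is symmetric decreasing
about some hyperplane in every direction, then it is radially decreasing up to a
translation. -/
theorem radially_decreasing_of_symmetric_decreasing_all_directions
    (d : ℕ) (μ₀ : EuclideanSpace ℝ (Fin d) → ℝ)
    (hcont : Continuous μ₀) (hpos : ∀ x, 0 ≤ μ₀ x) (hint : Integrable μ₀)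
    (hsym : ∀ e : EuclideanSpace ℝ (Fin d), ‖e‖ = 1 →
      ∃ c : ℝ, ∀ x : EuclideanSpace ℝ (Fin d), (inner ℝ x e : ℝ) = c →
        (∀ t : ℝ, μ₀ (x + t • e) = μ₀ (x - t • e)) ∧
        (∀ s t : ℝ, 0 ≤ s → s ≤ t → μ₀ (x + t • e) ≤ μ₀ (x + s • e))) :
    ∃ a : EuclideanSpace ℝ (Fin d), ∃ G : ℝ → ℝ,
      AntitoneOn G (Set.Ici 0) ∧ ∀ x, μ₀ x = G ‖x - a‖ := by
  rcases Nat.eq_zero_or_pos d with h0 | h0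
  · -- degenerate case d = 0
    subst h0
    refine ⟨0, fun _ => μ₀ 0, fun _ _ _ _ _ => le_rfl, fun x => ?_⟩
    rw [show x = 0 from PiLp.ext fun i => Fin.elim0 i]
  by_cases hzero : ∀ x, μ₀ x = 0
  · exact ⟨0, fun _ => 0, fun _ _ _ _ _ => le_rfl, fun x => hzero x⟩
  push_neg at hzero
  -- the hypothesis, packaged
  have H : ∀ e : EuclideanSpace ℝ (Fin d), ‖e‖ = 1 → ∃ c : ℝ, RDValid μ₀ e c := hsym
  set b := EuclideanSpace.basisFun (Fin d) ℝ with hbdef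
  have hbnorm : ∀ i, ‖b i‖ = 1 := b.orthonormal.1
  have hc : ∀ i : Fin d, ∃ c, RDValid μ₀ (b i) c := fun i => H (b i) (hbnorm i)
  choose c hcv using hc
  set a : EuclideanSpace ℝ (Fin d) := ∑ i, c i • b i with ha
  set ν : EuclideanSpace ℝ (Fin d) → ℝ := fun x => μ₀ (x + a) with hν
  have hνcont : Continuous ν := hcont.comp (continuous_id.add continuous_const)
  have hνpos : ∀ x, 0 ≤ ν x := fun x => hpos _
  have hνint : Integrable ν := hint.comp_add_right a
  have hνz : ∃ x, ν x ≠ 0 := by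
    obtain ⟨x, hx⟩ := hzero
    refine ⟨x - a, ?_⟩
    show μ₀ (x - a + a) ≠ 0
    rwa [show x - a + a = x by module]
  have hab : ∀ i, ⟪a, b i⟫ = c i := by
    intro i
    rw [ha, sum_inner]
    rw [Finset.sum_eq_single i]
    · rw [real_inner_smul_left, inner_self_one (hbnorm i), mul_one]
    · intro j _ hji
      rw [real_inner_smul_left, b.orthonormal.2 hji, mul_zero]
    · intro hi; exact absurd (Finset.mem_univ i) hi
  have hνb : ∀ i, RDValid ν (b i) 0 := by
    intro i
    have := (hcv i).translate (a := a)
    rwa [hab i, sub_self] at this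
  have heven : ∀ x, ν (-x) = ν x := even_of_basis_valid (hbdef ▸ hνb)
  -- every direction has valid center 0 for ν
  have hall : ∀ e : EuclideanSpace ℝ (Fin d), ‖e‖ = 1 → RDValid ν e 0 := by
    intro e he
    obtain ⟨γ₀, hγ₀⟩ := H e he
    have hγ : RDValid ν e (γ₀ - ⟪a, e⟫) := hγ₀.translate
    set γ := γ₀ - ⟪a, e⟫ with hγdef
    have hγ' : RDValid ν e (-γ) := hγ.neg_center heven
    by_cases hγz : γ = 0
    · rwa [hγz] at hγ
    · exfalso
      have hne : -γ ≠ γ := by intro hh; apply hγz; linarith [hh]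
      have := RDValid.eq_zero he hνcont hνpos hνint hγ' hγ hne
      obtain ⟨x, hx⟩ := hνz
      exact hx (this x)
  -- conclusion
  set e₀ : EuclideanSpace ℝ (Fin d) := b ⟨0, h0⟩ with he₀def
  have he₀ : ‖e₀‖ = 1 := hbnorm _
  refine ⟨a, fun t => ν (t • e₀), ?_, ?_⟩
  · intro s hs t ht hst
    have := (hall e₀ he₀ 0 (by simp)).2 s t hs hst
    simpa using this
  · intro x
    have hx : μ₀ x = ν (x - a) := by
      show μ₀ x = μ₀ (x - a + a)
      rw [show x - a + a = x by module]
    rw [hx]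
    show ν (x - a) = ν (‖x - a‖ • e₀)
    by_cases hxa : x - a = 0
    · rw [hxa]; simp
    · have hnorm : ‖x - a‖ ≠ 0 := norm_ne_zero_iff.mpr hxa
      set u : EuclideanSpace ℝ (Fin d) := ‖x - a‖⁻¹ • (x - a) with hu
      have hun : ‖u‖ = 1 := by
        rw [hu, norm_smul, norm_inv, norm_norm, inv_mul_cancel₀ hnorm]
      have h1 : ν (x - a) = ν (‖x - a‖ • u) := by
        rw [hu, smul_smul, mul_inv_cancel₀ hnorm, one_smul]
      rw [h1, rotation_invariant hall hun he₀ ‖x - a‖]
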